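/- Let (w_i)_{i ∈ I} be an infinite family of finite 0-1 words that forms an antichain for the factor order (no w_i is a factor of w_j for i ≠ j) and such that no w_i begins with the letter 1. Then the graphs G_{1111·w_i} form an antichain under induced embedding: for i ≠ j, G_{1111·w_i} does not admit an induced embedding into G_{1111·w_j}. -/

import Mathlib

/-- Adjacency rule of the graph associated with a 0-1 word `μ` (letters indexed from 1):
for `i < j`, `{i,j}` is an edge iff (`μ j = 1` and `j = i+1`) or (`μ j = 0` and `j ≠ i+1`). -/
def GmuAdj (μ : ℕ → Bool) (i j : ℕ) : Prop :=
  (i < j ∧ ((μ j = true ∧ j = i + 1) ∨ (μ j = false ∧ j ≠ i + 1))) ∨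
  (j < i ∧ ((μ i = true ∧ i = j + 1) ∨ (μ i = false ∧ i ≠ j + 1)))

/-- The graph `G_μ` on `ℕ` associated with the 0-1 word `μ : {1,2,…} → {0,1}`. -/
def Gmu (μ : ℕ → Bool) : SimpleGraph ℕ where
  Adj i j := GmuAdj μ i j
  symm := ⟨fun i j h => Or.symm h⟩
  loopless := ⟨fun i h => by
    rcases h with ⟨h1, _⟩ | ⟨h1, _⟩ <;> exact lt_irrefl i h1⟩

/-- Adjacency rule for the graph of a finite 0-1 word `w = w₁…wₙ` on vertices `{0,…,n}`. -/
def GWAdj (w : List Bool) (i j : ℕ) : Prop :=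
  (i < j ∧ ((w.getD (j - 1) false = true ∧ j = i + 1) ∨
            (w.getD (j - 1) false = false ∧ j ≠ i + 1))) ∨
  (j < i ∧ ((w.getD (i - 1) false = true ∧ i = j + 1) ∨
            (w.getD (i - 1) false = false ∧ i ≠ j + 1)))

/-- The graph `G_w` of a finite 0-1 word `w = w₁…wₙ`, on the vertex set `{0,1,…,n}`. -/
def GW (w : List Bool) : SimpleGraph (Fin (w.length + 1)) where
  Adj i j := GWAdj w i j
  symm := ⟨fun i j h => Or.symm h⟩
  loopless := ⟨fun i h => by
    rcases h with ⟨h1, _⟩ | ⟨h1, _⟩ <;> exact lt_irrefl (i : ℕ) h1⟩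

/-- `M` is a module of the graph `G`: every vertex outside `M` is adjacent either to all
vertices of `M` or to none of them. -/
def IsModule {V : Type*} (G : SimpleGraph V) (M : Set V) : Prop :=
  ∀ x ∉ M, (∀ a ∈ M, G.Adj x a) ∨ (∀ a ∈ M, ¬ G.Adj x a)

/-- A graph is prime if its only modules are the empty set, singletons and the whole
vertex set. -/
def GraphPrime {V : Type*} (G : SimpleGraph V) : Prop :=
  ∀ M : Set V, IsModule G M → M = ∅ ∨ (∃ a, M = {a}) ∨ M = Set.univ

lemma gwadj_comm {w : List Bool} {p q : ℕ} : GWAdj w p q ↔ GWAdj w q p := or_comm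

lemma adj_consec {w : List Bool} {p q : ℕ} (h : q = p + 1) :
    GWAdj w p q ↔ w.getD (q - 1) false = true := by
  subst h
  unfold GWAdj
  constructor
  · rintro (⟨h1, ⟨h2, h3⟩ | ⟨h2, h3⟩⟩ | ⟨h1, h⟩)
    · exact h2
    · exact absurd rfl h3
    · omega
  · intro h2
    exact Or.inl ⟨by omega, Or.inl ⟨h2, rfl⟩⟩

lemma adj_far {w : List Bool} {p q : ℕ} (h : p + 2 ≤ q) :
    GWAdj w p q ↔ w.getD (q - 1) false = false := by
  unfold GWAdj
  constructor
  · rintro (⟨h1, ⟨h2, h3⟩ | ⟨h2, h3⟩⟩ | ⟨h1, _⟩)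
    · omega
    · exact h2
    · omega
  · intro h2
    exact Or.inl ⟨by omega, Or.inr ⟨h2, by omega⟩⟩

lemma getD_pre (u : List Bool) (k : ℕ) :
    (List.replicate 4 true ++ u).getD (k + 4) false = u.getD k false := by
  show (true :: true :: true :: true :: u).getD (k + 4) false = u.getD k false
  simp [List.getD_cons_succ]

lemma getD_pre_lt (u : List Bool) (k : ℕ) (h : k < 4) :
    (List.replicate 4 true ++ u).getD k false = true := by
  show (true :: true :: true :: true :: u).getD k false = true
  interval_cases k <;> rfl

lemma bool_eq_of_iff {a b : Bool} (h : (a = true) ↔ (b = true)) : a = b := by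
  rcases a <;> rcases b <;> simp_all

lemma exists_01_infix : ∀ (v : List Bool), v.head? = some false → true ∈ v →
    [false, true] <:+: v := by
  intro v
  induction v with
  | nil => simp
  | cons b tl ih =>
    intro hh hm
    have hb : b = false := by simpa using hh
    subst hb
    have hm' : true ∈ tl := by simpa using hm
    cases tl with
    | nil => simp at hm'
    | cons b2 tl2 =>
      cases b2 with
      | true => exact ⟨[], tl2, by simp⟩
      | false => exact List.infix_cons (ih (by simp) (by simpa using hm'))

lemma infix_of_match {u v : List Bool} (c : ℕ) (hc : c + u.length ≤ v.length)
    (h : ∀ i, i < u.length → u.getD i false = v.getD (c + i) false) : u <:+: v := by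
  have hu : u = (v.drop c).take u.length := by
    apply List.ext_getElem
    · simp; omega
    · intro i hi hi2
      have h1 := h i hi
      rw [List.getD_eq_getElem u false hi] at h1
      rw [List.getElem_take, List.getElem_drop]
      rw [h1, List.getD_eq_getElem v false (by omega)]
  rw [hu]
  exact ((List.take_prefix _ _).isInfix).trans ((List.drop_suffix _ _).isInfix)

lemma bool_fp (b : Bool) : b = false ∨ b = true := by
  cases b
  · exact Or.inl rfl
  · exact Or.inr rfl

lemma consec_of_nonadj {w : List Bool} {p q : ℕ} (h1 : p < q)
    (h2 : w.getD (q - 1) false = false) (h3 : ¬ GWAdj w p q) : q = p + 1 := by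
  rcases (by omega : q = p + 1 ∨ p + 2 ≤ q) with h | h
  · exact h
  · exact absurd ((adj_far h).mpr h2) h3

lemma consec_of_adj {w : List Bool} {p q : ℕ} (h1 : p < q)
    (h2 : w.getD (q - 1) false = true) (h3 : GWAdj w p q) : q = p + 1 := by
  rcases (by omega : q = p + 1 ∨ p + 2 ≤ q) with h | h
  · exact h
  · have h4 := (adj_far h).mp h3
    rw [h2] at h4
    exact Bool.noConfusion h4

lemma letter_false_of_adj_far {w : List Bool} {p q : ℕ} (h : p + 2 ≤ q)
    (h3 : GWAdj w p q) : w.getD (q - 1) false = false := (adj_far h).mp h3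

lemma letter_true_of_nonadj_far {w : List Bool} {p q : ℕ} (h : p + 2 ≤ q)
    (h3 : ¬ GWAdj w p q) : w.getD (q - 1) false = true := by
  rcases bool_fp (w.getD (q - 1) false) with h2 | h2
  · exact absurd ((adj_far h).mpr h2) h3
  · exact h2

set_option maxHeartbeats 3200000 in
lemma key_main (u v : List Bool) (hu : u.head? = some false) (hv : v.head? = some false)
    (hlen : 2 ≤ u.length) (h6 : u.length = 2 → u.getD 1 false = false)
    (f : GW (List.replicate 4 true ++ u) ↪g GW (List.replicate 4 true ++ v)) :
    u <:+: v := by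
  have hu0 : u.getD 0 false = false := by
    cases u with
    | nil => simp at hu
    | cons b t => simpa using hu
  have hNlen : (List.replicate 4 true ++ u).length = u.length + 4 := by simp
  have hMlen : (List.replicate 4 true ++ v).length = v.length + 4 := by simp
  obtain ⟨F, hFadj, hFinj, hFle⟩ :
      ∃ F : ℕ → ℕ,
        (∀ k l, k ≤ u.length + 4 → l ≤ u.length + 4 →
          (GWAdj (List.replicate 4 true ++ v) (F k) (F l) ↔
           GWAdj (List.replicate 4 true ++ u) k l)) ∧
        (∀ k l, k ≤ u.length + 4 → l ≤ u.length + 4 → F k = F l → k = l) ∧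
        (∀ k, k ≤ u.length + 4 → F k ≤ v.length + 4) := by
    refine ⟨fun k => if h : k < (List.replicate 4 true ++ u).length + 1
      then (f ⟨k, h⟩ : ℕ) else 0, ?_, ?_, ?_⟩
    · intro k l hk hl
      have hk' : k < (List.replicate 4 true ++ u).length + 1 := by omega
      have hl' : l < (List.replicate 4 true ++ u).length + 1 := by omega
      simp only [dif_pos hk', dif_pos hl']
      exact f.map_adj_iff
    · intro k l hk hl h
      have hk' : k < (List.replicate 4 true ++ u).length + 1 := by omega
      have hl' : l < (List.replicate 4 true ++ u).length + 1 := by omega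
      simp only [dif_pos hk', dif_pos hl'] at h
      have := f.injective (Fin.ext h)
      simpa using congrArg Fin.val this
    · intro k hk
      have hk' : k < (List.replicate 4 true ++ u).length + 1 := by omega
      simp only [dif_pos hk']
      have := (f ⟨k, hk'⟩).isLt
      omega
  have hne : ∀ k l, k ≤ u.length + 4 → l ≤ u.length + 4 → k ≠ l → F k ≠ F l :=
    fun k l hk hl hkl e => hkl (hFinj k l hk hl e)
  -- letters of U on the prefix
  have hU1 : (List.replicate 4 true ++ u).getD 0 false = true := getD_pre_lt u 0 (by omega)
  have hU2 : (List.replicate 4 true ++ u).getD 1 false = true := getD_pre_lt u 1 (by omega)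
  have hU3 : (List.replicate 4 true ++ u).getD 2 false = true := getD_pre_lt u 2 (by omega)
  have hU4 : (List.replicate 4 true ++ u).getD 3 false = true := getD_pre_lt u 3 (by omega)
  have hU5 : (List.replicate 4 true ++ u).getD 4 false = false := by
    have h := getD_pre u 0
    rw [hu0] at h
    exact h
  -- V-adjacency facts among the images of 0..5
  have vab : GWAdj (List.replicate 4 true ++ v) (F 0) (F 1) :=
    (hFadj 0 1 (by omega) (by omega)).mpr ((adj_consec rfl).mpr hU1)
  have vbx : GWAdj (List.replicate 4 true ++ v) (F 1) (F 2) :=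
    (hFadj 1 2 (by omega) (by omega)).mpr ((adj_consec rfl).mpr hU2)
  have vxy : GWAdj (List.replicate 4 true ++ v) (F 2) (F 3) :=
    (hFadj 2 3 (by omega) (by omega)).mpr ((adj_consec rfl).mpr hU3)
  have vyz : GWAdj (List.replicate 4 true ++ v) (F 3) (F 4) :=
    (hFadj 3 4 (by omega) (by omega)).mpr ((adj_consec rfl).mpr hU4)
  have vas : GWAdj (List.replicate 4 true ++ v) (F 0) (F 5) :=
    (hFadj 0 5 (by omega) (by omega)).mpr ((adj_far (by omega)).mpr hU5)
  have vbs : GWAdj (List.replicate 4 true ++ v) (F 1) (F 5) :=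
    (hFadj 1 5 (by omega) (by omega)).mpr ((adj_far (by omega)).mpr hU5)
  have vxs : GWAdj (List.replicate 4 true ++ v) (F 2) (F 5) :=
    (hFadj 2 5 (by omega) (by omega)).mpr ((adj_far (by omega)).mpr hU5)
  have vys : GWAdj (List.replicate 4 true ++ v) (F 3) (F 5) :=
    (hFadj 3 5 (by omega) (by omega)).mpr ((adj_far (by omega)).mpr hU5)
  have nax : ¬ GWAdj (List.replicate 4 true ++ v) (F 0) (F 2) := by
    intro h
    have h2 := letter_false_of_adj_far (by omega) ((hFadj 0 2 (by omega) (by omega)).mp h)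
    rw [show (2:ℕ) - 1 = 1 from rfl, hU2] at h2
    exact Bool.noConfusion h2
  have nay : ¬ GWAdj (List.replicate 4 true ++ v) (F 0) (F 3) := by
    intro h
    have h2 := letter_false_of_adj_far (by omega) ((hFadj 0 3 (by omega) (by omega)).mp h)
    rw [show (3:ℕ) - 1 = 2 from rfl, hU3] at h2
    exact Bool.noConfusion h2
  have naz : ¬ GWAdj (List.replicate 4 true ++ v) (F 0) (F 4) := by
    intro h
    have h2 := letter_false_of_adj_far (by omega) ((hFadj 0 4 (by omega) (by omega)).mp h)
    rw [show (4:ℕ) - 1 = 3 from rfl, hU4] at h2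
    exact Bool.noConfusion h2
  have nby : ¬ GWAdj (List.replicate 4 true ++ v) (F 1) (F 3) := by
    intro h
    have h2 := letter_false_of_adj_far (by omega) ((hFadj 1 3 (by omega) (by omega)).mp h)
    rw [show (3:ℕ) - 1 = 2 from rfl, hU3] at h2
    exact Bool.noConfusion h2
  have nbz : ¬ GWAdj (List.replicate 4 true ++ v) (F 1) (F 4) := by
    intro h
    have h2 := letter_false_of_adj_far (by omega) ((hFadj 1 4 (by omega) (by omega)).mp h)
    rw [show (4:ℕ) - 1 = 3 from rfl, hU4] at h2
    exact Bool.noConfusion h2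
  have nxz : ¬ GWAdj (List.replicate 4 true ++ v) (F 2) (F 4) := by
    intro h
    have h2 := letter_false_of_adj_far (by omega) ((hFadj 2 4 (by omega) (by omega)).mp h)
    rw [show (4:ℕ) - 1 = 3 from rfl, hU4] at h2
    exact Bool.noConfusion h2
  have nzs : ¬ GWAdj (List.replicate 4 true ++ v) (F 4) (F 5) := by
    intro h
    have h2 := (adj_consec rfl).mp ((hFadj 4 5 (by omega) (by omega)).mp h)
    rw [show (5:ℕ) - 1 = 4 from rfl, hU5] at h2
    exact Bool.noConfusion h2
  have d01 : F 0 ≠ F 1 := hne 0 1 (by omega) (by omega) (by omega)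
  have d02 : F 0 ≠ F 2 := hne 0 2 (by omega) (by omega) (by omega)
  have d03 : F 0 ≠ F 3 := hne 0 3 (by omega) (by omega) (by omega)
  have d04 : F 0 ≠ F 4 := hne 0 4 (by omega) (by omega) (by omega)
  have d05 : F 0 ≠ F 5 := hne 0 5 (by omega) (by omega) (by omega)
  have d12 : F 1 ≠ F 2 := hne 1 2 (by omega) (by omega) (by omega)
  have d13 : F 1 ≠ F 3 := hne 1 3 (by omega) (by omega) (by omega)
  have d14 : F 1 ≠ F 4 := hne 1 4 (by omega) (by omega) (by omega)
  have d15 : F 1 ≠ F 5 := hne 1 5 (by omega) (by omega) (by omega)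
  have d23 : F 2 ≠ F 3 := hne 2 3 (by omega) (by omega) (by omega)
  have d24 : F 2 ≠ F 4 := hne 2 4 (by omega) (by omega) (by omega)
  have d25 : F 2 ≠ F 5 := hne 2 5 (by omega) (by omega) (by omega)
  have d34 : F 3 ≠ F 4 := hne 3 4 (by omega) (by omega) (by omega)
  have d35 : F 3 ≠ F 5 := hne 3 5 (by omega) (by omega) (by omega)
  have d45 : F 4 ≠ F 5 := hne 4 5 (by omega) (by omega) (by omega)
  -- PART A : the images of 2,3,4,5 form a consecutive run c+2,...,c+5 with a zero at position c+5
  have hbase : ∃ c, F 2 = c + 2 ∧ F 3 = c + 3 ∧ F 4 = c + 4 ∧ F 5 = c + 5 ∧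
      (List.replicate 4 true ++ v).getD (c + 4) false = false := by
    have hm0 : F 0 ≤ max (max (max (max (max (F 0) (F 1)) (F 2)) (F 3)) (F 4)) (F 5) := by omega
    have hm1 : F 1 ≤ max (max (max (max (max (F 0) (F 1)) (F 2)) (F 3)) (F 4)) (F 5) := by omega
    have hm2 : F 2 ≤ max (max (max (max (max (F 0) (F 1)) (F 2)) (F 3)) (F 4)) (F 5) := by omega
    have hm3 : F 3 ≤ max (max (max (max (max (F 0) (F 1)) (F 2)) (F 3)) (F 4)) (F 5) := by omega
    have hm4 : F 4 ≤ max (max (max (max (max (F 0) (F 1)) (F 2)) (F 3)) (F 4)) (F 5) := by omega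
    have hm5 : F 5 ≤ max (max (max (max (max (F 0) (F 1)) (F 2)) (F 3)) (F 4)) (F 5) := by omega
    rcases (by omega :
        max (max (max (max (max (F 0) (F 1)) (F 2)) (F 3)) (F 4)) (F 5) = F 0 ∨
        max (max (max (max (max (F 0) (F 1)) (F 2)) (F 3)) (F 4)) (F 5) = F 1 ∨
        max (max (max (max (max (F 0) (F 1)) (F 2)) (F 3)) (F 4)) (F 5) = F 2 ∨
        max (max (max (max (max (F 0) (F 1)) (F 2)) (F 3)) (F 4)) (F 5) = F 3 ∨
        max (max (max (max (max (F 0) (F 1)) (F 2)) (F 3)) (F 4)) (F 5) = F 4 ∨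
        max (max (max (max (max (F 0) (F 1)) (F 2)) (F 3)) (F 4)) (F 5) = F 5) with
      hmax | hmax | hmax | hmax | hmax | hmax
    · -- max = F 0
      have hb : F 1 ≤ F 0 ∧ F 2 ≤ F 0 ∧ F 3 ≤ F 0 ∧ F 4 ≤ F 0 ∧ F 5 ≤ F 0 := by omega
      clear hm0 hm1 hm2 hm3 hm4 hm5 hmax
      obtain ⟨hb1, hb2, hb3, hb4, hb5⟩ := hb
      exfalso
      rcases bool_fp
          ((List.replicate 4 true ++ v).getD (F 0 - 1) false) with hL | hL
      · have e2 : F 0 = F 2 + 1 := consec_of_nonadj (by omega) hL (fun h => nax (gwadj_comm.mp h))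
        have e3 : F 0 = F 3 + 1 := consec_of_nonadj (by omega) hL (fun h => nay (gwadj_comm.mp h))
        omega
      · have e1 : F 0 = F 1 + 1 := consec_of_adj (by omega) hL (gwadj_comm.mp vab)
        have e5 : F 0 = F 5 + 1 := consec_of_adj (by omega) hL (gwadj_comm.mp vas)
        omega
    · -- max = F 1
      have hb : F 0 ≤ F 1 ∧ F 2 ≤ F 1 ∧ F 3 ≤ F 1 ∧ F 4 ≤ F 1 ∧ F 5 ≤ F 1 := by omega
      clear hm0 hm1 hm2 hm3 hm4 hm5 hmax
      obtain ⟨hb1, hb2, hb3, hb4, hb5⟩ := hb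
      exfalso
      rcases bool_fp
          ((List.replicate 4 true ++ v).getD (F 1 - 1) false) with hL | hL
      · have e3 : F 1 = F 3 + 1 := consec_of_nonadj (by omega) hL (fun h => nby (gwadj_comm.mp h))
        have e4 : F 1 = F 4 + 1 := consec_of_nonadj (by omega) hL (fun h => nbz (gwadj_comm.mp h))
        omega
      · have e0 : F 1 = F 0 + 1 := consec_of_adj (by omega) hL vab
        have e2 : F 1 = F 2 + 1 := consec_of_adj (by omega) hL (gwadj_comm.mp vbx)
        have e5 : F 1 = F 5 + 1 := consec_of_adj (by omega) hL (gwadj_comm.mp vbs)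
        omega
    · -- max = F 2
      have hb : F 0 ≤ F 2 ∧ F 1 ≤ F 2 ∧ F 3 ≤ F 2 ∧ F 4 ≤ F 2 ∧ F 5 ≤ F 2 := by omega
      clear hm0 hm1 hm2 hm3 hm4 hm5 hmax
      obtain ⟨hb1, hb2, hb3, hb4, hb5⟩ := hb
      exfalso
      rcases bool_fp
          ((List.replicate 4 true ++ v).getD (F 2 - 1) false) with hL | hL
      · have e0 : F 2 = F 0 + 1 := consec_of_nonadj (by omega) hL nax
        have e4 : F 2 = F 4 + 1 := consec_of_nonadj (by omega) hL (fun h => nxz (gwadj_comm.mp h))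
        omega
      · have e1 : F 2 = F 1 + 1 := consec_of_adj (by omega) hL vbx
        have e3 : F 2 = F 3 + 1 := consec_of_adj (by omega) hL (gwadj_comm.mp vxy)
        omega
    · -- max = F 3
      have hb : F 0 ≤ F 3 ∧ F 1 ≤ F 3 ∧ F 2 ≤ F 3 ∧ F 4 ≤ F 3 ∧ F 5 ≤ F 3 := by omega
      clear hm0 hm1 hm2 hm3 hm4 hm5 hmax
      obtain ⟨hb1, hb2, hb3, hb4, hb5⟩ := hb
      exfalso
      rcases bool_fp
          ((List.replicate 4 true ++ v).getD (F 3 - 1) false) with hL | hL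
      · have e0 : F 3 = F 0 + 1 := consec_of_nonadj (by omega) hL nay
        have e1 : F 3 = F 1 + 1 := consec_of_nonadj (by omega) hL nby
        omega
      · have e2 : F 3 = F 2 + 1 := consec_of_adj (by omega) hL vxy
        have e4 : F 3 = F 4 + 1 := consec_of_adj (by omega) hL (gwadj_comm.mp vyz)
        omega
    · -- max = F 4
      have hb : F 0 ≤ F 4 ∧ F 1 ≤ F 4 ∧ F 2 ≤ F 4 ∧ F 3 ≤ F 4 ∧ F 5 ≤ F 4 := by omega
      clear hm0 hm1 hm2 hm3 hm4 hm5 hmax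
      obtain ⟨hb1, hb2, hb3, hb4, hb5⟩ := hb
      exfalso
      rcases bool_fp
          ((List.replicate 4 true ++ v).getD (F 4 - 1) false) with hL | hL
      · have e0 : F 4 = F 0 + 1 := consec_of_nonadj (by omega) hL naz
        have e1 : F 4 = F 1 + 1 := consec_of_nonadj (by omega) hL nbz
        omega
      · -- F 4 = F 3 + 1, all others ≤ F 4 - 2, then F 3 is max of the five
        have e3 : F 4 = F 3 + 1 := consec_of_adj (by omega) hL vyz
        rcases bool_fp
            ((List.replicate 4 true ++ v).getD (F 3 - 1) false) with hL3 | hL3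
        · have e0 : F 3 = F 0 + 1 := consec_of_nonadj (by omega) hL3 nay
          have e1 : F 3 = F 1 + 1 := consec_of_nonadj (by omega) hL3 nby
          omega
        · have e2 : F 3 = F 2 + 1 := consec_of_adj (by omega) hL3 vxy
          have e5 : F 3 = F 5 + 1 := consec_of_adj (by omega) hL3 (gwadj_comm.mp vys)
          omega
    · -- max = F 5 : the good case
      have hb : F 0 ≤ F 5 ∧ F 1 ≤ F 5 ∧ F 2 ≤ F 5 ∧ F 3 ≤ F 5 ∧ F 4 ≤ F 5 := by omega
      clear hm0 hm1 hm2 hm3 hm4 hm5 hmax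
      obtain ⟨hb1, hb2, hb3, hb4, hb5⟩ := hb
      rcases bool_fp
          ((List.replicate 4 true ++ v).getD (F 5 - 1) false) with hL | hL
      swap
      · exfalso
        have e0 : F 5 = F 0 + 1 := consec_of_adj (by omega) hL vas
        have e1 : F 5 = F 1 + 1 := consec_of_adj (by omega) hL vbs
        omega
      · have ez : F 5 = F 4 + 1 := consec_of_nonadj (by omega) hL nzs
        rcases bool_fp
            ((List.replicate 4 true ++ v).getD (F 4 - 1) false) with hL4 | hL4
        · exfalso
          have e0 : F 4 = F 0 + 1 := consec_of_nonadj (by omega) hL4 naz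
          have e1 : F 4 = F 1 + 1 := consec_of_nonadj (by omega) hL4 nbz
          omega
        · have ey : F 4 = F 3 + 1 := consec_of_adj (by omega) hL4 vyz
          rcases bool_fp
              ((List.replicate 4 true ++ v).getD (F 3 - 1) false) with hL3 | hL3
          · exfalso
            have e0 : F 3 = F 0 + 1 := consec_of_nonadj (by omega) hL3 nay
            have e1 : F 3 = F 1 + 1 := consec_of_nonadj (by omega) hL3 nby
            omega
          · have ex : F 3 = F 2 + 1 := consec_of_adj (by omega) hL3 vxy
            have hs5 : 5 ≤ F 5 := by
              by_contra hlt
              have := getD_pre_lt v (F 5 - 1) (by omega)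
              rw [this] at hL
              simp at hL
            refine ⟨F 5 - 5, by omega, by omega, by omega, by omega, ?_⟩
            have : F 5 - 1 = F 5 - 5 + 4 := by omega
            rw [← this]
            exact hL
  obtain ⟨c, hc2, hc3, hc4, hc5, hL5⟩ := hbase
  have hL3 : (List.replicate 4 true ++ v).getD (c + 2) false = true := by
    have h := vxy
    rw [hc2, hc3] at h
    have := (adj_consec (show c + 3 = (c + 2) + 1 from rfl)).mp h
    exact this

  -- PART B : the translation extends all the way up
  have hstep : ∀ t, 5 ≤ t → t + 1 ≤ u.length + 4 →
      (∀ k, 2 ≤ k → k ≤ t → F k = c + k) → F (t + 1) = c + (t + 1) := by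
    intro t ht htN IH
    have hF2 := IH 2 (by omega) (by omega)
    have hF3 := IH 3 (by omega) (by omega)
    have hF4 := IH 4 (by omega) (by omega)
    have hF5 := IH 5 (by omega) ht
    have hFt := IH t (by omega) le_rfl
    have htaken : ∀ k, 2 ≤ k → k ≤ t → F (t + 1) ≠ c + k := by
      intro k h1 h2 e
      have := hFinj (t + 1) k (by omega) (by omega) (by rw [e, IH k h1 h2])
      omega
    have htri : F (t + 1) ≤ c + 1 ∨ (c + 2 ≤ F (t + 1) ∧ F (t + 1) ≤ c + t) ∨
        F (t + 1) = c + (t + 1) ∨ c + t + 2 ≤ F (t + 1) := by omega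
    rcases bool_fp ((List.replicate 4 true ++ u).getD t false) with hl | hl
    · -- letter at t+1 is 0
      have hvj : ∀ j, 2 ≤ j → j + 2 ≤ t + 1 →
          GWAdj (List.replicate 4 true ++ v) (F j) (F (t + 1)) := by
        intro j h1 h2
        exact (hFadj j (t + 1) (by omega) (by omega)).mpr ((adj_far h2).mpr hl)
      have hvt : ¬ GWAdj (List.replicate 4 true ++ v) (F t) (F (t + 1)) := by
        intro h
        have h2 := (adj_consec rfl).mp ((hFadj t (t + 1) (by omega) (by omega)).mp h)
        rw [show t + 1 - 1 = t from rfl, hl] at h2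
        exact Bool.noConfusion h2
      rcases htri with h | h | h | h
      · exfalso
        have hadj := hvj 3 (by omega) (by omega)
        rw [hF3] at hadj
        have h2 := letter_false_of_adj_far (show F (t + 1) + 2 ≤ c + 3 by omega)
          (gwadj_comm.mp hadj)
        rw [show c + 3 - 1 = c + 2 from rfl, hL3] at h2
        exact Bool.noConfusion h2
      · exact absurd (by omega : F (t + 1) = c + (F (t + 1) - c))
          (htaken (F (t + 1) - c) (by omega) (by omega))
      · exact h
      · exfalso
        have hadj := hvj 2 (by omega) (by omega)
        rw [hF2] at hadj
        have hfalse := letter_false_of_adj_far (show c + 2 + 2 ≤ F (t + 1) by omega) hadj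
        have h3 : GWAdj (List.replicate 4 true ++ v) (c + t) (F (t + 1)) :=
          (adj_far (by omega)).mpr hfalse
        rw [← hFt] at h3
        exact hvt h3
    · -- letter at t+1 is 1
      have hvt : GWAdj (List.replicate 4 true ++ v) (F t) (F (t + 1)) :=
        (hFadj t (t + 1) (by omega) (by omega)).mpr ((adj_consec rfl).mpr hl)
      have hvj : ∀ j, 2 ≤ j → j + 2 ≤ t + 1 →
          ¬ GWAdj (List.replicate 4 true ++ v) (F j) (F (t + 1)) := by
        intro j h1 h2 h
        have h3 := letter_false_of_adj_far h2 ((hFadj j (t + 1) (by omega) (by omega)).mp h)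
        rw [show t + 1 - 1 = t from rfl, hl] at h3
        exact Bool.noConfusion h3
      rcases htri with h | h | h | h
      · exfalso
        rcases (by omega : t = 5 ∨ 6 ≤ t) with ht5 | ht6
        · -- t+1 = 6 : use vertex 7
          subst ht5
          have hnorm : F (5 + 1) = F 6 := rfl
          have hul : 3 ≤ u.length := by
            rcases (by omega : u.length = 2 ∨ 3 ≤ u.length) with h2 | h3
            · exfalso
              have h4 := h6 h2
              have hg : (List.replicate 4 true ++ u).getD 5 false = u.getD 1 false := by
                have := getD_pre u 1
                exact this
              rw [hg, h4] at hl
              exact Bool.noConfusion hl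
            · exact h3
          have ne7k : ∀ k, 2 ≤ k → k ≤ 5 → F 7 ≠ c + k := by
            intro k h1 h2 e
            have := hFinj 7 k (by omega) (by omega) (by rw [e, IH k h1 h2])
            omega
          rcases bool_fp ((List.replicate 4 true ++ u).getD 6 false) with hl7 | hl7
          · -- letter at 7 is 0 : 7 adjacent to 2..5, not to 6
            have h73 : GWAdj (List.replicate 4 true ++ v) (F 3) (F 7) :=
              (hFadj 3 7 (by omega) (by omega)).mpr ((adj_far (by omega)).mpr hl7)
            have h72 : GWAdj (List.replicate 4 true ++ v) (F 2) (F 7) :=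
              (hFadj 2 7 (by omega) (by omega)).mpr ((adj_far (by omega)).mpr hl7)
            have h76 : ¬ GWAdj (List.replicate 4 true ++ v) (F 6) (F 7) := by
              intro hh
              have h2 := (adj_consec rfl).mp ((hFadj 6 7 (by omega) (by omega)).mp hh)
              rw [show (7:ℕ) - 1 = 6 from rfl, hl7] at h2
              exact Bool.noConfusion h2
            rcases (by omega : F 7 ≤ c + 1 ∨ (c + 2 ≤ F 7 ∧ F 7 ≤ c + 5) ∨ c + 6 ≤ F 7)
              with h7 | h7 | h7
            · rw [hF3] at h73
              have h2 := letter_false_of_adj_far (show F 7 + 2 ≤ c + 3 by omega)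
                (gwadj_comm.mp h73)
              rw [show c + 3 - 1 = c + 2 from rfl, hL3] at h2
              exact Bool.noConfusion h2
            · exact absurd (by omega : F 7 = c + (F 7 - c))
                (ne7k (F 7 - c) (by omega) (by omega))
            · rw [hF2] at h72
              have hf := letter_false_of_adj_far (by omega) h72
              have h3 : GWAdj (List.replicate 4 true ++ v) (F 6) (F 7) :=
                (adj_far (show F 6 + 2 ≤ F 7 by omega)).mpr hf
              exact h76 h3
          · -- letter at 7 is 1 : 7 adjacent to 6 only
            have h76 : GWAdj (List.replicate 4 true ++ v) (F 6) (F 7) :=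
              (hFadj 6 7 (by omega) (by omega)).mpr ((adj_consec rfl).mpr hl7)
            have h75 : ¬ GWAdj (List.replicate 4 true ++ v) (F 5) (F 7) := by
              intro hh
              have h2 := letter_false_of_adj_far (by omega : 5 + 2 ≤ 7)
                ((hFadj 5 7 (by omega) (by omega)).mp hh)
              rw [show (7:ℕ) - 1 = 6 from rfl, hl7] at h2
              exact Bool.noConfusion h2
            have h74 : ¬ GWAdj (List.replicate 4 true ++ v) (F 4) (F 7) := by
              intro hh
              have h2 := letter_false_of_adj_far (by omega : 4 + 2 ≤ 7)
                ((hFadj 4 7 (by omega) (by omega)).mp hh)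
              rw [show (7:ℕ) - 1 = 6 from rfl, hl7] at h2
              exact Bool.noConfusion h2
            rcases (by omega : F 7 ≤ c + 1 ∨ (c + 2 ≤ F 7 ∧ F 7 ≤ c + 5) ∨ c + 6 ≤ F 7)
              with h7 | h7 | h7
            · rw [hF5] at h75
              have h2 := letter_true_of_nonadj_far (show F 7 + 2 ≤ c + 5 by omega)
                (fun hh => h75 (gwadj_comm.mp hh))
              rw [show c + 5 - 1 = c + 4 from rfl, hL5] at h2
              exact Bool.noConfusion h2
            · exact absurd (by omega : F 7 = c + (F 7 - c))
                (ne7k (F 7 - c) (by omega) (by omega))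
            · have hf := letter_false_of_adj_far (show F 6 + 2 ≤ F 7 by omega) h76
              have h3 : GWAdj (List.replicate 4 true ++ v) (c + 4) (F 7) :=
                (adj_far (by omega)).mpr hf
              rw [← hF4] at h3
              exact h74 h3
        · -- t + 1 ≥ 7 : vertex t+1 is not adjacent to 5
          have hnadj := hvj 5 (by omega) (by omega)
          rw [hF5] at hnadj
          have h2 := letter_true_of_nonadj_far (show F (t + 1) + 2 ≤ c + 5 by omega)
            (fun hh => hnadj (gwadj_comm.mp hh))
          rw [show c + 5 - 1 = c + 4 from rfl, hL5] at h2
          exact Bool.noConfusion h2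
      · exact absurd (by omega : F (t + 1) = c + (F (t + 1) - c))
          (htaken (F (t + 1) - c) (by omega) (by omega))
      · exact h
      · exfalso
        rw [hFt] at hvt
        have hf := letter_false_of_adj_far (show c + t + 2 ≤ F (t + 1) by omega) hvt
        have hFt1 := IH (t - 1) (by omega) (by omega)
        have h3 : GWAdj (List.replicate 4 true ++ v) (c + (t - 1)) (F (t + 1)) :=
          (adj_far (by omega)).mpr hf
        rw [← hFt1] at h3
        exact (hvj (t - 1) (by omega) (by omega)) h3
  have htrans : ∀ t, 5 ≤ t → t ≤ u.length + 4 → ∀ k, 2 ≤ k → k ≤ t → F k = c + k := by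
    intro t ht
    induction t, ht using Nat.le_induction with
    | base =>
      intro _ k h2 h5
      interval_cases k
      · exact hc2
      · exact hc3
      · exact hc4
      · exact hc5
    | succ t ht IH =>
      intro hN k h2 hk
      have IH' := IH (by omega)
      rcases (by omega : k ≤ t ∨ k = t + 1) with h | h
      · exact IH' k h2 h
      · rw [h]
        exact hstep t ht hN IH'
  have hFall : ∀ k, 2 ≤ k → k ≤ u.length + 4 → F k = c + k :=
    htrans (u.length + 4) (by omega) le_rfl
  have hcM : c + (u.length + 4) ≤ v.length + 4 := by
    have h1 := hFle (u.length + 4) le_rfl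
    rw [hFall (u.length + 4) (by omega) le_rfl] at h1
    omega
  have hletters : ∀ i, i < u.length → u.getD i false = v.getD (c + i) false := by
    intro i hi
    have e1 : F (i + 4) = c + (i + 4) := hFall (i + 4) (by omega) (by omega)
    have e2 : F (i + 5) = c + (i + 5) := hFall (i + 5) (by omega) (by omega)
    have hiff := hFadj (i + 4) (i + 5) (by omega) (by omega)
    rw [e1, e2] at hiff
    have hV := adj_consec (w := List.replicate 4 true ++ v)
      (show c + (i + 5) = (c + (i + 4)) + 1 by omega)
    have hU := adj_consec (w := List.replicate 4 true ++ u)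
      (show i + 5 = (i + 4) + 1 by omega)
    have hbool : (List.replicate 4 true ++ v).getD (c + (i + 5) - 1) false =
        (List.replicate 4 true ++ u).getD (i + 5 - 1) false :=
      bool_eq_of_iff ((hV.symm.trans hiff).trans hU)
    have eU : (List.replicate 4 true ++ u).getD (i + 5 - 1) false = u.getD i false := by
      rw [show i + 5 - 1 = i + 4 from rfl]
      exact getD_pre u i
    have eV : (List.replicate 4 true ++ v).getD (c + (i + 5) - 1) false
        = v.getD (c + i) false := by
      rw [show c + (i + 5) - 1 = (c + i) + 4 by omega]
      exact getD_pre v (c + i)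
    rw [eU, eV] at hbool
    exact hbool.symm
  exact infix_of_match c (by omega) hletters

set_option maxHeartbeats 1600000 in
lemma key_01 (v : List Bool) (hnv : true ∉ v)
    (f : GW (List.replicate 4 true ++ [false, true]) ↪g GW (List.replicate 4 true ++ v)) :
    False := by
  have hNlen : (List.replicate 4 true ++ [false, true]).length = 6 := rfl
  obtain ⟨F, hFadj, hFinj⟩ :
      ∃ F : ℕ → ℕ,
        (∀ k l, k ≤ 6 → l ≤ 6 →
          (GWAdj (List.replicate 4 true ++ v) (F k) (F l) ↔
           GWAdj (List.replicate 4 true ++ [false, true]) k l)) ∧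
        (∀ k l, k ≤ 6 → l ≤ 6 → F k = F l → k = l) := by
    refine ⟨fun k => if h : k < (List.replicate 4 true ++ [false, true]).length + 1
      then (f ⟨k, h⟩ : ℕ) else 0, ?_, ?_⟩
    · intro k l hk hl
      have hk' : k < (List.replicate 4 true ++ [false, true]).length + 1 := by omega
      have hl' : l < (List.replicate 4 true ++ [false, true]).length + 1 := by omega
      simp only [dif_pos hk', dif_pos hl']
      exact f.map_adj_iff
    · intro k l hk hl h
      have hk' : k < (List.replicate 4 true ++ [false, true]).length + 1 := by omega
      have hl' : l < (List.replicate 4 true ++ [false, true]).length + 1 := by omega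
      simp only [dif_pos hk', dif_pos hl'] at h
      have := f.injective (Fin.ext h)
      simpa using congrArg Fin.val this
  have hvall : ∀ i, v.getD i false = false := by
    intro i
    rcases lt_or_ge i v.length with h | h
    · rw [List.getD_eq_getElem v false h]
      rcases bool_fp (v[i]) with h2 | h2
      · exact h2
      · exact absurd (h2 ▸ List.getElem_mem h) hnv
    · exact List.getD_eq_default v false h
  -- U-nonadjacency facts for the independent set {0,2,4,6}
  have hUlet : ∀ q : ℕ, q = 2 ∨ q = 4 ∨ q = 6 →
      (List.replicate 4 true ++ [false, true]).getD (q - 1) false = true := by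
    intro q hq
    rcases hq with rfl | rfl | rfl <;> rfl
  have nonadjU : ∀ p q : ℕ, p + 2 ≤ q → (q = 2 ∨ q = 4 ∨ q = 6) →
      ¬ GWAdj (List.replicate 4 true ++ [false, true]) p q := by
    intro p q h hq hadj
    have h2 := letter_false_of_adj_far h hadj
    rw [hUlet q hq] at h2
    exact Bool.noConfusion h2
  have n02 : ¬ GWAdj (List.replicate 4 true ++ v) (F 0) (F 2) :=
    fun h => nonadjU 0 2 (by omega) (by omega) ((hFadj 0 2 (by omega) (by omega)).mp h)
  have n04 : ¬ GWAdj (List.replicate 4 true ++ v) (F 0) (F 4) :=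
    fun h => nonadjU 0 4 (by omega) (by omega) ((hFadj 0 4 (by omega) (by omega)).mp h)
  have n06 : ¬ GWAdj (List.replicate 4 true ++ v) (F 0) (F 6) :=
    fun h => nonadjU 0 6 (by omega) (by omega) ((hFadj 0 6 (by omega) (by omega)).mp h)
  have n24 : ¬ GWAdj (List.replicate 4 true ++ v) (F 2) (F 4) :=
    fun h => nonadjU 2 4 (by omega) (by omega) ((hFadj 2 4 (by omega) (by omega)).mp h)
  have n26 : ¬ GWAdj (List.replicate 4 true ++ v) (F 2) (F 6) :=
    fun h => nonadjU 2 6 (by omega) (by omega) ((hFadj 2 6 (by omega) (by omega)).mp h)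
  have n46 : ¬ GWAdj (List.replicate 4 true ++ v) (F 4) (F 6) :=
    fun h => nonadjU 4 6 (by omega) (by omega) ((hFadj 4 6 (by omega) (by omega)).mp h)
  have d02 : F 0 ≠ F 2 := fun e => by have := hFinj 0 2 (by omega) (by omega) e; omega
  have d04 : F 0 ≠ F 4 := fun e => by have := hFinj 0 4 (by omega) (by omega) e; omega
  have d06 : F 0 ≠ F 6 := fun e => by have := hFinj 0 6 (by omega) (by omega) e; omega
  have d24 : F 2 ≠ F 4 := fun e => by have := hFinj 2 4 (by omega) (by omega) e; omega
  have d26 : F 2 ≠ F 6 := fun e => by have := hFinj 2 6 (by omega) (by omega) e; omega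
  have d46 : F 4 ≠ F 6 := fun e => by have := hFinj 4 6 (by omega) (by omega) e; omega
  -- letter of V at any position ≥ 5 is 0
  have hVhigh : ∀ q : ℕ, 5 ≤ q →
      (List.replicate 4 true ++ v).getD (q - 1) false = false := by
    intro q hq
    rw [show q - 1 = (q - 5) + 4 by omega]
    rw [getD_pre v (q - 5)]
    exact hvall (q - 5)
  -- helper : two nonadjacent vertices with the larger one ≤ 4 are non-consecutive
  have hgap : ∀ a b : ℕ, b ≤ 4 →
      ¬ GWAdj (List.replicate 4 true ++ v) a b → b ≠ a + 1 := by
    intro a b hb hn he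
    exact hn ((adj_consec he).mpr (getD_pre_lt v (b - 1) (by omega)))
  -- max of the four images
  have hm0 : F 0 ≤ max (max (max (F 0) (F 2)) (F 4)) (F 6) := by omega
  have hm2 : F 2 ≤ max (max (max (F 0) (F 2)) (F 4)) (F 6) := by omega
  have hm4 : F 4 ≤ max (max (max (F 0) (F 2)) (F 4)) (F 6) := by omega
  have hm6 : F 6 ≤ max (max (max (F 0) (F 2)) (F 4)) (F 6) := by omega
  rcases (by omega : max (max (max (F 0) (F 2)) (F 4)) (F 6) ≤ 4 ∨
      5 ≤ max (max (max (F 0) (F 2)) (F 4)) (F 6)) with hc | hc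
  · -- all four are ≤ 4 : pairwise non-consecutive, impossible
    have b0 : F 0 ≤ 4 := by omega
    have b2 : F 2 ≤ 4 := by omega
    have b4 : F 4 ≤ 4 := by omega
    have b6 : F 6 ≤ 4 := by omega
    clear hm0 hm2 hm4 hm6 hc
    have g1 : F 2 ≠ F 0 + 1 := hgap (F 0) (F 2) b2 n02
    have g2 : F 0 ≠ F 2 + 1 := hgap (F 2) (F 0) b0 (fun hh => n02 (gwadj_comm.mp hh))
    have g3 : F 4 ≠ F 0 + 1 := hgap (F 0) (F 4) b4 n04
    have g4 : F 0 ≠ F 4 + 1 := hgap (F 4) (F 0) b0 (fun hh => n04 (gwadj_comm.mp hh))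
    have g5 : F 6 ≠ F 0 + 1 := hgap (F 0) (F 6) b6 n06
    have g6 : F 0 ≠ F 6 + 1 := hgap (F 6) (F 0) b0 (fun hh => n06 (gwadj_comm.mp hh))
    have g7 : F 4 ≠ F 2 + 1 := hgap (F 2) (F 4) b4 n24
    have g8 : F 2 ≠ F 4 + 1 := hgap (F 4) (F 2) b2 (fun hh => n24 (gwadj_comm.mp hh))
    have g9 : F 6 ≠ F 2 + 1 := hgap (F 2) (F 6) b6 n26
    have g10 : F 2 ≠ F 6 + 1 := hgap (F 6) (F 2) b2 (fun hh => n26 (gwadj_comm.mp hh))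
    have g11 : F 6 ≠ F 4 + 1 := hgap (F 4) (F 6) b6 n46
    have g12 : F 4 ≠ F 6 + 1 := hgap (F 6) (F 4) b4 (fun hh => n46 (gwadj_comm.mp hh))
    omega
  · -- the max is ≥ 5 : a zero position, its nonneighbours below are all equal to max - 1
    have hlet : (List.replicate 4 true ++ v).getD
        (max (max (max (F 0) (F 2)) (F 4)) (F 6) - 1) false = false := hVhigh _ hc
    rcases (by omega : max (max (max (F 0) (F 2)) (F 4)) (F 6) = F 0 ∨
        max (max (max (F 0) (F 2)) (F 4)) (F 6) = F 2 ∨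
        max (max (max (F 0) (F 2)) (F 4)) (F 6) = F 4 ∨
        max (max (max (F 0) (F 2)) (F 4)) (F 6) = F 6) with hT | hT | hT | hT
    · rw [hT] at hlet
      have e1 : F 0 = F 2 + 1 :=
        consec_of_nonadj (by omega) hlet (fun h => n02 (gwadj_comm.mp h))
      have e2 : F 0 = F 4 + 1 :=
        consec_of_nonadj (by omega) hlet (fun h => n04 (gwadj_comm.mp h))
      omega
    · rw [hT] at hlet
      have e1 : F 2 = F 0 + 1 := consec_of_nonadj (by omega) hlet n02
      have e2 : F 2 = F 4 + 1 :=
        consec_of_nonadj (by omega) hlet (fun h => n24 (gwadj_comm.mp h))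
      omega
    · rw [hT] at hlet
      have e1 : F 4 = F 0 + 1 := consec_of_nonadj (by omega) hlet n04
      have e2 : F 4 = F 2 + 1 := consec_of_nonadj (by omega) hlet n24
      omega
    · rw [hT] at hlet
      have e1 : F 6 = F 0 + 1 := consec_of_nonadj (by omega) hlet n06
      have e2 : F 6 = F 2 + 1 := consec_of_nonadj (by omega) hlet n26
      omega

lemma key (u v : List Bool) (hu : u.head? = some false) (hv : v.head? = some false)
    (f : GW (List.replicate 4 true ++ u) ↪g GW (List.replicate 4 true ++ v)) :
    u <:+: v := by
  cases u with
  | nil => simp at hu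
  | cons b u' =>
    have hb : b = false := by simpa using hu
    subst hb
    cases u' with
    | nil =>
      cases v with
      | nil => simp at hv
      | cons bv v' =>
        have hbv : bv = false := by simpa using hv
        subst hbv
        exact ⟨[], v', rfl⟩
    | cons b2 u'' =>
      cases b2 with
      | false =>
        refine key_main _ v hu hv ?_ (fun _ => rfl) f
        simp only [List.length_cons]
        omega
      | true =>
        cases u'' with
        | nil =>
          by_cases hm : true ∈ v
          · exact exists_01_infix v hv hm
          · exact (key_01 v hm f).elim
        | cons b3 u3 =>
          refine key_main _ v hu hv ?_ ?_ f
          · simp only [List.length_cons]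
            omega
          · intro h
            exfalso
            simp only [List.length_cons] at h
            omega

theorem stmt13 {I : Type*} [Infinite I] (w : I → List Bool)
    (hanti : ∀ i j : I, i ≠ j → ¬ (w i <:+: w j))
    (hhead : ∀ i : I, (w i).head? ≠ some true) :
    ∀ i j : I, i ≠ j →
      ¬ Nonempty (GW (List.replicate 4 true ++ w i) ↪g
                  GW (List.replicate 4 true ++ w j)) := by
  have hne : ∀ k : I, w k ≠ [] := by
    intro k hk
    obtain ⟨k', hk'⟩ := exists_ne k
    exact hanti k k' (Ne.symm hk') (hk ▸ List.nil_infix)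
  have hhead' : ∀ k : I, (w k).head? = some false := by
    intro k
    cases hwk : w k with
    | nil => exact absurd hwk (hne k)
    | cons b t =>
      have := hhead k
      rw [hwk] at this
      cases b with
      | false => rfl
      | true => simp at this
  intro i j hij h
  obtain ⟨f⟩ := h
  exact hanti i j hij (key (w i) (w j) (hhead' i) (hhead' j) f)
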